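/- With G = M ⋊ C as above, if the norm element ν(G) is nilpotent in R and (m_1,...,m_{n-1}, m·a) generates G, then (m_1,...,m_{n-1}) already generates M as an R-module. -/

import Mathlib

/-- The action of `C` on `M` by additive automorphisms, packaged as a homomorphism
`C →* MulAut (Multiplicative M)`, used to form the semidirect product `M ⋊ C`. -/
def sdAction (C M : Type*) [Group C] [AddCommGroup M] [DistribMulAction C M] :
    C →* MulAut (Multiplicative M) where
  toFun c := AddEquiv.toMultiplicative (DistribMulAction.toAddAut C M c)
  map_one' := by ext x; simp
  map_mul' c c' := by ext x; simp [mul_smul]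

/-- If the norm element `ν(G)` is nilpotent in `R = ℤ[C]/ann(M)` (expressed via its
faithful action on `M`) and `(m_1, …, m_n, m'·a)` generates `G = M ⋊ C`, then
`(m_1, …, m_n)` already generates `M` as an `R`-module. -/
theorem stmt_10 {C M : Type*} [Group C] [AddCommGroup M] [DistribMulAction C M]
    (a : C) (hC : ∀ c : C, c ∈ Subgroup.zpowers a)
    (hnil : ∃ k : ℕ, ∀ x : M, (fun y : M => ∑ᶠ c : C, c • y)^[k] x = 0)
    (n : ℕ) (m : Fin n → M) (m' : M)
    (hgen : Subgroup.closure
        ((Set.range fun i : Fin n =>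
            (⟨Multiplicative.ofAdd (m i), 1⟩ : Multiplicative M ⋊[sdAction C M] C)) ∪
          {(⟨Multiplicative.ofAdd m', a⟩ : Multiplicative M ⋊[sdAction C M] C)}) = ⊤) :
    Submodule.span ℤ (Set.range fun p : C × Fin n => p.1 • m p.2) = ⊤ := by
  classical
  set N : Submodule ℤ M := Submodule.span ℤ (Set.range fun p : C × Fin n => p.1 • m p.2)
    with hNdef
  -- `N` is invariant under the action of `C`.
  have hNinv : ∀ (c : C) (x : M), x ∈ N → c • x ∈ N := by
    intro c x hx
    induction hx using Submodule.span_induction with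
    | mem x hx =>
      obtain ⟨p, rfl⟩ := hx
      rw [← mul_smul]
      exact Submodule.subset_span ⟨(c * p.1, p.2), rfl⟩
    | zero => simp
    | add x y _ _ hx hy => rw [smul_add]; exact N.add_mem hx hy
    | smul z x _ hx => rw [smul_comm]; exact N.smul_mem z hx
  set g : Multiplicative M ⋊[sdAction C M] C := ⟨Multiplicative.ofAdd m', a⟩ with hgdef
  have hφ : ∀ (c : C) (x : Multiplicative M),
      Multiplicative.toAdd ((sdAction C M c) x) = c • Multiplicative.toAdd x := fun _ _ => rfl
  have hgright : ∀ k : ℤ, (g ^ k).right = a ^ k := by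
    intro k
    have : SemidirectProduct.rightHom (g ^ k) = (SemidirectProduct.rightHom g) ^ k :=
      map_zpow _ _ _
    simpa [SemidirectProduct.rightHom] using this
  have hgrightn : ∀ j : ℕ, (g ^ j).right = a ^ j := by
    intro j
    have := hgright (j : ℤ)
    rwa [zpow_natCast, zpow_natCast] at this
  -- the subgroup witnessing the key congruence
  let H : Subgroup (Multiplicative M ⋊[sdAction C M] C) :=
    { carrier := {p | ∃ k : ℤ, p.right = a ^ k ∧
        Multiplicative.toAdd p.left - Multiplicative.toAdd ((g ^ k).left) ∈ N}
      one_mem' := ⟨0, by simp, by simp⟩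
      mul_mem' := by
        rintro p q ⟨k₁, hr₁, hd₁⟩ ⟨k₂, hr₂, hd₂⟩
        refine ⟨k₁ + k₂, by rw [SemidirectProduct.mul_right, hr₁, hr₂, zpow_add], ?_⟩
        rw [zpow_add, SemidirectProduct.mul_left, SemidirectProduct.mul_left,
          toAdd_mul, toAdd_mul, hφ, hφ, hr₁, hgright k₁]
        have heq : Multiplicative.toAdd p.left + a ^ k₁ • Multiplicative.toAdd q.left -
            (Multiplicative.toAdd (g ^ k₁).left +
              a ^ k₁ • Multiplicative.toAdd (g ^ k₂).left) =
            (Multiplicative.toAdd p.left - Multiplicative.toAdd (g ^ k₁).left) +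
              a ^ k₁ • (Multiplicative.toAdd q.left - Multiplicative.toAdd (g ^ k₂).left) := by
          rw [smul_sub]; abel
        rw [heq]
        exact N.add_mem hd₁ (hNinv _ _ hd₂)
      inv_mem' := by
        rintro p ⟨k, hr, hd⟩
        refine ⟨-k, by rw [SemidirectProduct.inv_right, hr, zpow_neg], ?_⟩
        rw [zpow_neg, SemidirectProduct.inv_left, SemidirectProduct.inv_left,
          hφ, hφ, toAdd_inv, toAdd_inv, hr, hgright k]
        have heq : (a ^ k)⁻¹ • (-Multiplicative.toAdd p.left) -
            (a ^ k)⁻¹ • (-Multiplicative.toAdd (g ^ k).left) =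
            (a ^ k)⁻¹ • (-(Multiplicative.toAdd p.left -
              Multiplicative.toAdd (g ^ k).left)) := by
          rw [smul_neg, smul_neg, smul_neg, smul_sub]; abel
        rw [heq]
        exact hNinv _ _ (N.neg_mem hd) }
  have hH : ∀ p : Multiplicative M ⋊[sdAction C M] C, p ∈ H := by
    have hle : Subgroup.closure
        ((Set.range fun i : Fin n =>
            (⟨Multiplicative.ofAdd (m i), 1⟩ : Multiplicative M ⋊[sdAction C M] C)) ∪
          {(⟨Multiplicative.ofAdd m', a⟩ : Multiplicative M ⋊[sdAction C M] C)}) ≤ H := by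
      apply Subgroup.closure_le _ |>.mpr
      rintro p (⟨i, rfl⟩ | rfl)
      · refine ⟨0, by simp, ?_⟩
        have hmi : m i ∈ N := Submodule.subset_span ⟨((1 : C), i), one_smul _ _⟩
        simpa using hmi
      · exact ⟨1, by simp [hgdef], by simp [hgdef]⟩
    rw [hgen] at hle
    exact fun p => hle trivial
  have key : ∀ x : M, ∃ k : ℤ, a ^ k = 1 ∧
      x - Multiplicative.toAdd ((g ^ k).left) ∈ N := by
    intro x
    obtain ⟨k, hr, hd⟩ := hH ⟨Multiplicative.ofAdd x, 1⟩
    exact ⟨k, hr.symm, hd⟩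
  -- the left component of natural powers of `g`
  have hSnat : ∀ j : ℕ, Multiplicative.toAdd ((g ^ j).left) =
      ∑ i ∈ Finset.range j, a ^ i • m' := by
    intro j
    induction j with
    | zero => simp
    | succ j ih =>
      rw [pow_succ, SemidirectProduct.mul_left, toAdd_mul, hφ, hgrightn, ih,
        Finset.sum_range_succ]
      simp [hgdef]
  have hSneg : ∀ j : ℕ, a ^ (j : ℤ) = 1 → Multiplicative.toAdd ((g ^ (-(j : ℤ))).left) =
      -Multiplicative.toAdd ((g ^ (j : ℤ)).left) := by
    intro j h1
    rw [zpow_neg, SemidirectProduct.inv_left, hφ, toAdd_inv, hgright, h1, inv_one, one_smul]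
  rcases finite_or_infinite C with hfin | hinf
  · -- C finite
    haveI : Fintype C := Fintype.ofFinite C
    set d := orderOf a with hddef
    have hd0 : 0 < d := orderOf_pos a
    set f : M → M := fun y => ∑ i ∈ Finset.range d, a ^ i • y with hfdef
    have hfeq : ∀ y : M, (∑ᶠ c : C, c • y) = f y := by
      intro y
      rw [finsum_eq_sum_of_fintype]
      have himg : (Finset.range d).image (a ^ ·) = Finset.univ := by
        apply Finset.eq_univ_iff_forall.mpr
        intro c
        obtain ⟨t, rfl⟩ := hC c
        refine Finset.mem_image.mpr ⟨(t % (d : ℤ)).toNat, Finset.mem_range.mpr ?_, ?_⟩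
        · have h1 : t % (d : ℤ) < d := Int.emod_lt_of_pos t (by exact_mod_cast hd0)
          omega
        · have hnn : (0 : ℤ) ≤ t % (d : ℤ) :=
            Int.emod_nonneg t (by exact_mod_cast hd0.ne')
          rw [← zpow_natCast, Int.toNat_of_nonneg hnn, hddef, zpow_mod_orderOf]
      rw [← himg, Finset.sum_image]
      intro x hx y hy hxy
      exact pow_injOn_Iio_orderOf (Finset.mem_range.mp hx) (Finset.mem_range.mp hy) hxy
    have hfsub : ∀ x y : M, f (x - y) = f x - f y := by
      intro x y
      simp [hfdef, smul_sub, Finset.sum_sub_distrib]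
    have hfz : ∀ (z : ℤ) (y : M), f (z • y) = z • f y := by
      intro z y
      simp only [hfdef]
      rw [Finset.smul_sum]
      exact Finset.sum_congr rfl fun i _ => smul_comm _ _ _
    have hfN : ∀ y : M, y ∈ N → f y ∈ N := by
      intro y hy
      exact Submodule.sum_mem N fun i _ => hNinv _ _ hy
    -- block sums
    have hblock : ∀ q : ℕ, ∑ i ∈ Finset.range (d * q), a ^ i • m' = q • f m' := by
      intro q
      induction q with
      | zero => simp
      | succ q ih =>
        have : d * (q + 1) = d * q + d := by ring
        rw [this, Finset.sum_range_add, ih]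
        have h2 : ∀ i : ℕ, a ^ (d * q + i) • m' = a ^ i • m' := by
          intro i
          rw [pow_add, pow_mul, hddef, pow_orderOf_eq_one, one_pow, one_mul]
        rw [Finset.sum_congr rfl fun i _ => h2 i]
        rw [succ_nsmul]
    have key2 : ∀ x : M, ∃ y : M, x - f y ∈ N := by
      intro x
      obtain ⟨k, hk1, hd2⟩ := key x
      have hmain : ∃ z : ℤ, x - z • f m' ∈ N := by
        rcases le_or_gt 0 k with hk | hk
        · lift k to ℕ using hk
          rw [zpow_natCast] at hk1
          obtain ⟨q, rfl⟩ := orderOf_dvd_of_pow_eq_one hk1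
          refine ⟨q, ?_⟩
          rw [zpow_natCast, hSnat, hblock] at hd2
          simpa using hd2
        · set j : ℕ := (-k).toNat with hjdef
          have hkj : k = -(j : ℤ) := by omega
          have hj1 : a ^ (j : ℤ) = 1 := by
            rw [show (j : ℤ) = -k by omega, zpow_neg, hk1, inv_one]
          rw [hkj, hSneg j hj1, zpow_natCast, hSnat] at hd2
          have hj1' : a ^ j = 1 := by rwa [zpow_natCast] at hj1
          obtain ⟨q, hq⟩ := orderOf_dvd_of_pow_eq_one hj1'
          rw [hq, hblock] at hd2
          refine ⟨-(q : ℤ), ?_⟩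
          have : x - (-(q : ℤ)) • f m' = x - -(q • f m') := by
            rw [neg_zsmul, natCast_zsmul]
          rwa [this]
      obtain ⟨z, hz⟩ := hmain
      exact ⟨z • m', by rwa [hfz]⟩
    obtain ⟨K, hK⟩ := hnil
    have hKf : ∀ x : M, f^[K] x = 0 := by
      have he : (fun y : M => ∑ᶠ c : C, c • y) = f := funext hfeq
      rw [← he]
      exact hK
    have claim : ∀ t : ℕ, ∀ x : M, ∃ y : M, x - f^[t] y ∈ N := by
      intro t
      induction t with
      | zero => exact fun x => ⟨x, by simp⟩
      | succ t ih =>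
        intro x
        obtain ⟨y, hy⟩ := key2 x
        obtain ⟨w, hw⟩ := ih y
        refine ⟨w, ?_⟩
        have heq : x - f^[t + 1] w = (x - f y) + f (y - f^[t] w) := by
          rw [Function.iterate_succ_apply', hfsub]; abel
        rw [heq]
        exact N.add_mem hy (hfN _ hw)
    rw [Submodule.eq_top_iff']
    intro x
    obtain ⟨y, hy⟩ := claim K x
    rwa [hKf y, sub_zero] at hy
  · -- C infinite
    rw [Submodule.eq_top_iff']
    intro x
    obtain ⟨k, hk1, hd2⟩ := key x
    have hk0 : k = 0 := by
      by_contra h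
      have hfo : IsOfFinOrder a := isOfFinOrder_iff_zpow_eq_one.mpr ⟨k, h, hk1⟩
      have hfin : (Subgroup.zpowers a : Set C).Finite := hfo.finite_zpowers
      have huniv : (Subgroup.zpowers a : Set C) = Set.univ :=
        Set.eq_univ_iff_forall.mpr hC
      rw [huniv] at hfin
      haveI : Finite C := Set.finite_univ_iff.mp hfin
      exact not_finite C
    rw [hk0] at hd2
    simpa using hd2
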